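/- Let n ≥ 1, L, L' ≥ 0 and M ≥ 0 be integers, and let P ∈ ℂ[w₁,…,wₙ,v₁,…,vₙ] be bihomogeneous of bidegree (L,L') and harmonic (ΔP = 0). Then on the open set U = {(w,v) ∈ ℂⁿ × ℂⁿ : X(w,v) ≠ 0} one has −X·Δ( X^{−M}·P ) = M·(L + L' + n − M − 1) · X^{−M}·P. In particular, with M = L + F for an integer F ≥ 0, the eigenvalue equals (L+F)·(L' − F + n − 1), which is the paper's energy E₋(n,L,L',F) of the lower components of the supersymmetric doublets in the fermion-number-F sector. -/

import Mathlib

open MvPolynomial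

noncomputable section

/-- Weight function giving the degree in the `w`-variables (indexed by `Sum.inl`). -/
def wWt (n : ℕ) : (Fin n ⊕ Fin n) → ℕ := Sum.elim (fun _ => 1) (fun _ => 0)

/-- Weight function giving the degree in the `v`-variables (indexed by `Sum.inr`). -/
def vWt (n : ℕ) : (Fin n ⊕ Fin n) → ℕ := Sum.elim (fun _ => 0) (fun _ => 1)

/-- The complex Laplacian `Δ = ∑_α ∂²/∂w_α∂v_α` on polynomials. -/
def polyLap (n : ℕ) (P : MvPolynomial (Fin n ⊕ Fin n) ℂ) : MvPolynomial (Fin n ⊕ Fin n) ℂ :=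
  ∑ α : Fin n, pderiv (Sum.inl α) (pderiv (Sum.inr α) P)

/-- `X(w,v) = ∑_α w_α v_α`. -/
def XvalC (n : ℕ) (p : (Fin n → ℂ) × (Fin n → ℂ)) : ℂ := ∑ α : Fin n, p.1 α * p.2 α

/-- Evaluation of a polynomial at the point `(w, v)`. -/
def evalWV (n : ℕ) (P : MvPolynomial (Fin n ⊕ Fin n) ℂ)
    (p : (Fin n → ℂ) × (Fin n → ℂ)) : ℂ :=
  MvPolynomial.eval (Sum.elim p.1 p.2) P

/-- The operator `−X·Δ` acting on functions on `ℂⁿ × ℂⁿ` (the bosonic part of the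
supersymmetric Hamiltonian). -/
def Hop (n : ℕ) (f : (Fin n → ℂ) × (Fin n → ℂ) → ℂ)
    (p : (Fin n → ℂ) × (Fin n → ℂ)) : ℂ :=
  -(XvalC n p) * ∑ α : Fin n,
    fderiv ℂ (fun q => fderiv ℂ f q (Pi.single α 1, 0)) p (0, Pi.single α 1)

/-! ### Derivatives of polynomial evaluation -/

lemma hasFDerivAt_mvpoly_eval {ι : Type*} [Fintype ι] [DecidableEq ι]
    (Q : MvPolynomial ι ℂ) (x : ι → ℂ) :
    HasFDerivAt (fun y : ι → ℂ => eval y Q)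
      (∑ i, eval x (pderiv i Q) • (ContinuousLinearMap.proj i : (ι → ℂ) →L[ℂ] ℂ)) x := by
  induction Q using MvPolynomial.induction_on with
  | C a =>
      have h : (∑ i, eval x (pderiv i (C a : MvPolynomial ι ℂ)) •
          (ContinuousLinearMap.proj i : (ι → ℂ) →L[ℂ] ℂ)) = 0 := by
        ext y; simp
      rw [h]
      simpa using hasFDerivAt_const (a : ℂ) x
  | add p q hp hq =>
      have h : (∑ i, eval x (pderiv i (p + q)) •
            (ContinuousLinearMap.proj i : (ι → ℂ) →L[ℂ] ℂ))
          = (∑ i, eval x (pderiv i p) • (ContinuousLinearMap.proj i : (ι → ℂ) →L[ℂ] ℂ))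
            + ∑ i, eval x (pderiv i q) • (ContinuousLinearMap.proj i : (ι → ℂ) →L[ℂ] ℂ) := by
        ext y
        simp [add_mul, Finset.sum_add_distrib]
      rw [h]
      have hfun : (fun y : ι → ℂ => eval y (p + q)) = (fun y => eval y p) + (fun y => eval y q) := by
        funext y; simp
      rw [hfun]
      exact hp.add hq
  | mul_X p i hp =>
      have hx : HasFDerivAt (fun y : ι → ℂ => y i)
          (ContinuousLinearMap.proj i : (ι → ℂ) →L[ℂ] ℂ) x :=
        (ContinuousLinearMap.proj (R := ℂ) (φ := fun _ : ι => ℂ) i).hasFDerivAt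
      have h2 := hp.mul hx
      have h : (∑ j, eval x (pderiv j (p * X i)) •
            (ContinuousLinearMap.proj j : (ι → ℂ) →L[ℂ] ℂ))
          = eval x p • (ContinuousLinearMap.proj i : (ι → ℂ) →L[ℂ] ℂ)
            + x i • ∑ j, eval x (pderiv j p) •
              (ContinuousLinearMap.proj j : (ι → ℂ) →L[ℂ] ℂ) := by
        ext y
        simp only [ContinuousLinearMap.add_apply, ContinuousLinearMap.smul_apply,
          ContinuousLinearMap.sum_apply, ContinuousLinearMap.proj_apply,
          pderiv_mul, pderiv_X, map_add, eval_mul, eval_X, smul_eq_mul,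
          Pi.single_apply, apply_ite (eval x), map_one, map_zero,
          mul_ite, mul_one, mul_zero, add_mul, ite_mul, zero_mul]
        rw [Finset.sum_add_distrib, Finset.sum_ite_eq, Finset.mul_sum]
        simp only [Finset.mem_univ, if_true]
        rw [add_comm]
        congr 1
        exact Finset.sum_congr rfl fun j _ => by ring
      rw [h]
      have hg : (fun y : ι → ℂ => eval y (p * X i)) = fun y => eval y p * y i := by
        funext y; simp
      rw [hg]
      exact h2

def elimCLM (n : ℕ) : ((Fin n → ℂ) × (Fin n → ℂ)) →L[ℂ] ((Fin n ⊕ Fin n) → ℂ) :=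
  LinearMap.toContinuousLinearMap
    { toFun := fun p => Sum.elim p.1 p.2
      map_add' := by intro p q; funext i; cases i <;> rfl
      map_smul' := by intro c p; funext i; cases i <;> rfl }

@[simp] lemma elimCLM_apply (n : ℕ) (p : (Fin n → ℂ) × (Fin n → ℂ)) (i : Fin n ⊕ Fin n) :
    elimCLM n p i = Sum.elim p.1 p.2 i := rfl

def DQ (n : ℕ) (Q : MvPolynomial (Fin n ⊕ Fin n) ℂ) (p : (Fin n → ℂ) × (Fin n → ℂ)) :
    ((Fin n → ℂ) × (Fin n → ℂ)) →L[ℂ] ℂ :=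
  (∑ i, eval (Sum.elim p.1 p.2) (pderiv i Q) •
    (ContinuousLinearMap.proj i : ((Fin n ⊕ Fin n) → ℂ) →L[ℂ] ℂ)).comp (elimCLM n)

lemma hasFDerivAt_evalWV (n : ℕ) (Q : MvPolynomial (Fin n ⊕ Fin n) ℂ)
    (p : (Fin n → ℂ) × (Fin n → ℂ)) :
    HasFDerivAt (evalWV n Q) (DQ n Q p) p := by
  have h1 := hasFDerivAt_mvpoly_eval Q (Sum.elim p.1 p.2)
  have h2 : HasFDerivAt (elimCLM n) (elimCLM n) p := (elimCLM n).hasFDerivAt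
  exact h1.comp p h2

lemma DQ_applyW (n : ℕ) (Q : MvPolynomial (Fin n ⊕ Fin n) ℂ)
    (p : (Fin n → ℂ) × (Fin n → ℂ)) (α : Fin n) :
    DQ n Q p (Pi.single α 1, 0) = evalWV n (pderiv (Sum.inl α) Q) p := by
  simp only [DQ, ContinuousLinearMap.comp_apply, ContinuousLinearMap.sum_apply,
    ContinuousLinearMap.smul_apply, ContinuousLinearMap.proj_apply, smul_eq_mul, evalWV]
  rw [Fintype.sum_sum_type]
  have h1 : ∀ β : Fin n, elimCLM n (Pi.single α 1, (0 : Fin n → ℂ)) (Sum.inl β)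
      = if β = α then 1 else 0 := fun β => by simp [Pi.single_apply]
  have h2 : ∀ β : Fin n, elimCLM n (Pi.single α 1, (0 : Fin n → ℂ)) (Sum.inr β) = 0 :=
    fun β => rfl
  simp only [h1, h2, mul_zero, Finset.sum_const_zero, add_zero, mul_ite, mul_one]
  rw [Finset.sum_ite_eq', if_pos (Finset.mem_univ α)]

lemma DQ_applyV (n : ℕ) (Q : MvPolynomial (Fin n ⊕ Fin n) ℂ)
    (p : (Fin n → ℂ) × (Fin n → ℂ)) (α : Fin n) :
    DQ n Q p ((0 : Fin n → ℂ), Pi.single α 1) = evalWV n (pderiv (Sum.inr α) Q) p := by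
  simp only [DQ, ContinuousLinearMap.comp_apply, ContinuousLinearMap.sum_apply,
    ContinuousLinearMap.smul_apply, ContinuousLinearMap.proj_apply, smul_eq_mul, evalWV]
  rw [Fintype.sum_sum_type]
  have h1 : ∀ β : Fin n, elimCLM n ((0 : Fin n → ℂ), Pi.single α 1) (Sum.inr β)
      = if β = α then 1 else 0 := fun β => by simp [Pi.single_apply]
  have h2 : ∀ β : Fin n, elimCLM n ((0 : Fin n → ℂ), Pi.single α 1) (Sum.inl β) = 0 :=
    fun β => rfl
  simp only [h1, h2, mul_zero, Finset.sum_const_zero, zero_add, mul_ite, mul_one]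
  rw [Finset.sum_ite_eq', if_pos (Finset.mem_univ α)]

def Xpoly (n : ℕ) : MvPolynomial (Fin n ⊕ Fin n) ℂ :=
  ∑ α : Fin n, X (Sum.inl α) * X (Sum.inr α)

lemma evalWV_Xpoly (n : ℕ) (p : (Fin n → ℂ) × (Fin n → ℂ)) :
    evalWV n (Xpoly n) p = XvalC n p := by
  simp [evalWV, Xpoly, XvalC]

lemma pderiv_inl_Xpoly (n : ℕ) (α : Fin n) :
    pderiv (Sum.inl α) (Xpoly n) = X (Sum.inr α) := by
  rw [Xpoly, map_sum, Finset.sum_eq_single α]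
  · simp [pderiv_mul, pderiv_X, Pi.single_apply]
  · intro β _ hβ
    simp [pderiv_mul, pderiv_X, Pi.single_apply, Sum.inl.injEq, hβ.symm]
  · simp

lemma pderiv_inr_Xpoly (n : ℕ) (α : Fin n) :
    pderiv (Sum.inr α) (Xpoly n) = X (Sum.inl α) := by
  rw [Xpoly, map_sum, Finset.sum_eq_single α]
  · simp [pderiv_mul, pderiv_X, Pi.single_apply]
  · intro β _ hβ
    simp [pderiv_mul, pderiv_X, Pi.single_apply, Sum.inr.injEq, hβ.symm]
  · simp

lemma continuous_XvalC (n : ℕ) : Continuous (XvalC n) := by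
  unfold XvalC
  exact continuous_finset_sum _ fun α _ =>
    ((continuous_apply α).comp continuous_fst).mul ((continuous_apply α).comp continuous_snd)

lemma hasFDerivAt_XvalC (n : ℕ) (p : (Fin n → ℂ) × (Fin n → ℂ)) :
    HasFDerivAt (XvalC n) (DQ n (Xpoly n) p) p := by
  have h := hasFDerivAt_evalWV n (Xpoly n) p
  have hfe : evalWV n (Xpoly n) = XvalC n := by funext q; exact evalWV_Xpoly n q
  rwa [hfe] at h

lemma key_hasFDerivAt (n : ℕ) (z : ℤ) (Q : MvPolynomial (Fin n ⊕ Fin n) ℂ)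
    (p : (Fin n → ℂ) × (Fin n → ℂ)) (hp : XvalC n p ≠ 0) :
    HasFDerivAt (fun q => XvalC n q ^ z * evalWV n Q q)
      ((XvalC n p ^ z) • DQ n Q p
        + (evalWV n Q p * ((z : ℂ) * XvalC n p ^ (z - 1))) • DQ n (Xpoly n) p) p := by
  have h1 : HasFDerivAt (fun q => XvalC n q ^ z)
      (((z : ℂ) * XvalC n p ^ (z - 1)) • DQ n (Xpoly n) p) p :=
    (hasDerivAt_zpow z (XvalC n p) (Or.inl hp)).comp_hasFDerivAt p (hasFDerivAt_XvalC n p)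
  have h2 := h1.mul (hasFDerivAt_evalWV n Q p)
  exact h2.congr_fderiv (by rw [smul_smul])

/-! ### Commutation of partial derivatives and Euler identities -/

lemma pderiv_comm' {ι : Type*} [DecidableEq ι] (i j : ι) (Q : MvPolynomial ι ℂ) :
    pderiv i (pderiv j Q) = pderiv j (pderiv i Q) := by
  induction Q using MvPolynomial.induction_on' with
  | add p q hp hq => simp [map_add, hp, hq]
  | monomial d a =>
      rcases eq_or_ne i j with rfl | hij
      · rfl
      · simp only [pderiv_monomial]
        rw [Finsupp.tsub_apply, Finsupp.tsub_apply, Finsupp.single_apply,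
          Finsupp.single_apply]
        rw [if_neg hij, if_neg (Ne.symm hij)]
        simp only [tsub_zero]
        rw [tsub_right_comm]
        ring_nf

lemma euler_weighted {ι : Type*} [DecidableEq ι] [Fintype ι] (w : ι → ℕ) (m : ℕ)
    (P : MvPolynomial ι ℂ) (h : P.IsWeightedHomogeneous w m) :
    ∑ i : ι, (C (w i : ℂ)) * (X i * pderiv i P) = C (m : ℂ) * P := by
  have key : ∀ d ∈ P.support,
      ∑ i : ι, (C (w i : ℂ)) * (X i * pderiv i (monomial d (coeff d P)))
        = C (m : ℂ) * monomial d (coeff d P) := by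
    intro d hd
    have hwd : (Finsupp.weight w) d = m := h (mem_support_iff.1 hd)
    have step : ∀ i : ι, X i * pderiv i (monomial d (coeff d P))
        = (d i : ℂ) • monomial d (coeff d P) := by
      intro i
      rw [pderiv_monomial]
      rcases Nat.eq_zero_or_pos (d i) with h0 | h0
      · simp [h0]
      · have hle : Finsupp.single i 1 ≤ d := by
          rw [Finsupp.single_le_iff]; exact h0
        rw [X, monomial_mul, one_mul, add_tsub_cancel_of_le hle, smul_monomial]
        congr 1
        rw [smul_eq_mul]
        ring
    have step2 : ∀ i : ι, (C (w i : ℂ)) * (X i * pderiv i (monomial d (coeff d P)))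
        = ((w i * d i : ℕ) : ℂ) • monomial d (coeff d P) := by
      intro i
      rw [step i, ← smul_eq_C_mul, smul_smul]
      push_cast
      rfl
    simp only [step2]
    rw [← Finset.sum_smul]
    have hcast : (∑ i : ι, ((w i * d i : ℕ) : ℂ)) = ((∑ i : ι, w i * d i : ℕ) : ℂ) := by
      push_cast; ring
    rw [hcast]
    have hwsum : (∑ i : ι, w i * d i) = m := by
      rw [← hwd, Finsupp.weight_apply, Finsupp.sum_fintype]
      · exact Finset.sum_congr rfl fun i _ => by rw [smul_eq_mul, mul_comm]
      · intro i; simp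
    rw [hwsum, ← smul_eq_C_mul]
  conv_lhs => rw [P.as_sum]
  conv_rhs => rw [P.as_sum]
  simp only [map_sum, Finset.mul_sum]
  rw [Finset.sum_comm]
  exact Finset.sum_congr rfl key

/-- Euler identity, `w`-part, evaluated. -/
lemma euler_w (n L : ℕ) (P : MvPolynomial (Fin n ⊕ Fin n) ℂ)
    (hw : P.IsWeightedHomogeneous (wWt n) L) (p : (Fin n → ℂ) × (Fin n → ℂ)) :
    ∑ α : Fin n, p.1 α * evalWV n (pderiv (Sum.inl α) P) p = (L : ℂ) * evalWV n P p := by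
  have h := congrArg (eval (Sum.elim p.1 p.2)) (euler_weighted (wWt n) L P hw)
  simp only [map_sum, eval_mul, eval_C, eval_X, wWt, Fintype.sum_sum_type,
    Sum.elim_inl, Sum.elim_inr, Nat.cast_one, Nat.cast_zero, one_mul, zero_mul,
    Finset.sum_const_zero, add_zero] at h
  simpa [evalWV] using h

lemma euler_v (n L' : ℕ) (P : MvPolynomial (Fin n ⊕ Fin n) ℂ)
    (hv : P.IsWeightedHomogeneous (vWt n) L') (p : (Fin n → ℂ) × (Fin n → ℂ)) :
    ∑ α : Fin n, p.2 α * evalWV n (pderiv (Sum.inr α) P) p = (L' : ℂ) * evalWV n P p := by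
  have h := congrArg (eval (Sum.elim p.1 p.2)) (euler_weighted (vWt n) L' P hv)
  simp only [map_sum, eval_mul, eval_C, eval_X, vWt, Fintype.sum_sum_type,
    Sum.elim_inl, Sum.elim_inr, Nat.cast_one, Nat.cast_zero, one_mul, zero_mul,
    Finset.sum_const_zero, zero_add] at h
  simpa [evalWV] using h


/-- For `P` bihomogeneous of bidegree `(L,L')` and harmonic, one has
`−X·Δ(X^{−M}·P) = M·(L+L'+n−M−1)·X^{−M}·P` on `{X ≠ 0}`; in particular for
`M = L + F` the eigenvalue equals `(L+F)(L'−F+n−1)`, the paper's `E₋(n,L,L',F)`. -/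
theorem stmt11 (n L L' M : ℕ) (hn : 1 ≤ n) (P : MvPolynomial (Fin n ⊕ Fin n) ℂ)
    (hw : P.IsWeightedHomogeneous (wWt n) L)
    (hv : P.IsWeightedHomogeneous (vWt n) L')
    (hharm : polyLap n P = 0) :
    (∀ p : (Fin n → ℂ) × (Fin n → ℂ), XvalC n p ≠ 0 →
        Hop n (fun q => (XvalC n q) ^ (-(M : ℤ)) * evalWV n P q) p
          = ((M : ℂ) * ((L : ℂ) + (L' : ℂ) + (n : ℂ) - (M : ℂ) - 1)) *
            ((XvalC n p) ^ (-(M : ℤ)) * evalWV n P p))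
    ∧ ∀ F : ℕ, M = L + F →
        (M : ℂ) * ((L : ℂ) + (L' : ℂ) + (n : ℂ) - (M : ℂ) - 1)
          = ((L : ℂ) + (F : ℂ)) * ((L' : ℂ) - (F : ℂ) + (n : ℂ) - 1) := by
  constructor
  · intro p hp
    set z : ℤ := -(M : ℤ) with hz
    set f : (Fin n → ℂ) × (Fin n → ℂ) → ℂ :=
      fun q => (XvalC n q) ^ (-(M : ℤ)) * evalWV n P q with hf
    have hnhds : ∀ᶠ q in nhds p, XvalC n q ≠ 0 :=
      (continuous_XvalC n).continuousAt.eventually_ne hp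
    -- inner derivative
    have hinner : ∀ (α : Fin n) (q : (Fin n → ℂ) × (Fin n → ℂ)), XvalC n q ≠ 0 →
        fderiv ℂ f q (Pi.single α 1, 0)
          = XvalC n q ^ (-(M : ℤ)) * evalWV n (pderiv (Sum.inl α) P) q
            + (-(M : ℂ)) * (XvalC n q ^ (-(M : ℤ) - 1) * evalWV n (X (Sum.inr α) * P) q) := by
      intro α q hq
      rw [hf, (key_hasFDerivAt n (-(M : ℤ)) P q hq).fderiv]
      simp only [ContinuousLinearMap.add_apply, ContinuousLinearMap.smul_apply, smul_eq_mul,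
        DQ_applyW, pderiv_inl_Xpoly]
      have e1 : evalWV n (X (Sum.inr α)) q = q.2 α := by simp [evalWV]
      have e2 : evalWV n (X (Sum.inr α) * P) q = q.2 α * evalWV n P q := by simp [evalWV]
      rw [e1, e2]
      push_cast
      ring
    -- outer derivative
    have houter : ∀ α : Fin n,
        fderiv ℂ (fun q => fderiv ℂ f q (Pi.single α 1, 0)) p (0, Pi.single α 1)
          = XvalC n p ^ (-(M : ℤ))
              * evalWV n (pderiv (Sum.inr α) (pderiv (Sum.inl α) P)) p
            + ((-(M : ℂ)) * XvalC n p ^ (-(M : ℤ) - 1))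
              * (p.1 α * evalWV n (pderiv (Sum.inl α) P) p)
            + ((-(M : ℂ)) * XvalC n p ^ (-(M : ℤ) - 1))
              * (evalWV n P p + p.2 α * evalWV n (pderiv (Sum.inr α) P) p)
            + ((-(M : ℂ)) * ((-(M : ℂ)) - 1) * XvalC n p ^ (-(M : ℤ) - 2) * evalWV n P p)
              * (p.1 α * p.2 α) := by
      intro α
      have hG1 := key_hasFDerivAt n (-(M : ℤ)) (pderiv (Sum.inl α) P) p hp
      have hG2 := (key_hasFDerivAt n (-(M : ℤ) - 1) (X (Sum.inr α) * P) p hp).const_mul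
        (-(M : ℂ))
      have hG := hG1.add hG2
      have heq : (fun q => fderiv ℂ f q (Pi.single α 1, 0)) =ᶠ[nhds p]
          (fun q => XvalC n q ^ (-(M : ℤ)) * evalWV n (pderiv (Sum.inl α) P) q
            + (-(M : ℂ)) * (XvalC n q ^ (-(M : ℤ) - 1) * evalWV n (X (Sum.inr α) * P) q)) :=
        hnhds.mono fun q hq => hinner α q hq
      rw [heq.fderiv_eq]
      erw [hG.fderiv]
      simp only [ContinuousLinearMap.add_apply, ContinuousLinearMap.smul_apply, smul_eq_mul,
        DQ_applyV, pderiv_inr_Xpoly]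
      have e1 : evalWV n (X (Sum.inl α)) p = p.1 α := by simp [evalWV]
      have e2 : evalWV n (X (Sum.inr α) * P) p = p.2 α * evalWV n P p := by simp [evalWV]
      have e3 : evalWV n (pderiv (Sum.inr α) (X (Sum.inr α) * P)) p
          = evalWV n P p + p.2 α * evalWV n (pderiv (Sum.inr α) P) p := by
        rw [pderiv_mul, pderiv_X]
        simp [evalWV]
      rw [e1, e2, e3]
      have hc : ((-(M : ℤ) - 1 : ℤ) : ℂ) = -(M : ℂ) - 1 := by push_cast; ring
      have hc2 : ((-(M : ℤ) : ℤ) : ℂ) = -(M : ℂ) := by push_cast; ring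
      have hexp : (-(M : ℤ) - 1 - 1 : ℤ) = -(M : ℤ) - 2 := by ring
      rw [hc, hc2, hexp]
      ring
    -- the four sums
    have hT : ∑ α : Fin n, evalWV n (pderiv (Sum.inr α) (pderiv (Sum.inl α) P)) p = 0 := by
      have h1 : ∀ α : Fin n, pderiv (Sum.inr α) (pderiv (Sum.inl α) P)
          = pderiv (Sum.inl α) (pderiv (Sum.inr α) P) := fun α => pderiv_comm' _ _ P
      simp only [h1]
      have h2 : ∑ α : Fin n, evalWV n (pderiv (Sum.inl α) (pderiv (Sum.inr α) P)) p
          = evalWV n (polyLap n P) p := by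
        rw [polyLap, evalWV, map_sum]
        rfl
      rw [h2, hharm]
      simp [evalWV]
    have hW := euler_w n L P hw p
    have hV := euler_v n L' P hv p
    have hmix : ∑ α : Fin n,
        (evalWV n P p + p.2 α * evalWV n (pderiv (Sum.inr α) P) p)
          = (n : ℂ) * evalWV n P p + (L' : ℂ) * evalWV n P p := by
      rw [Finset.sum_add_distrib, hV, Finset.sum_const, Finset.card_univ, Fintype.card_fin,
        nsmul_eq_mul]
    have hX4 : ∑ α : Fin n, p.1 α * p.2 α = XvalC n p := rfl
    -- assemble
    rw [Hop]
    rw [Finset.sum_congr rfl fun α _ => houter α]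
    rw [Finset.sum_add_distrib, Finset.sum_add_distrib, Finset.sum_add_distrib,
      ← Finset.mul_sum, ← Finset.mul_sum, ← Finset.mul_sum, ← Finset.mul_sum]
    rw [hT, hW, hmix, hX4]
    -- zpow arithmetic
    have hx1 : XvalC n p ^ (-(M : ℤ)) = XvalC n p ^ (-(M : ℤ) - 1) * XvalC n p := by
      rw [← zpow_add_one₀ hp]
      norm_num
    have hx2 : XvalC n p ^ (-(M : ℤ) - 1) = XvalC n p ^ (-(M : ℤ) - 2) * XvalC n p := by
      rw [← zpow_add_one₀ hp]
      congr 1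
      ring
    rw [hx1, hx2]
    ring
  · intro F hF
    subst hF
    push_cast
    ring
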